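/- Let G be a connected simple graph with at least one edge, let G' be the Type B Whitney flip of G along (H, v1, v2), and let φ be the map sending each edge {x, y} of G with both endpoints in H to {τ(x), τ(y)} and fixing every other edge of G. Then φ maps the edge set of each block of G bijectively onto the edge set of a block of G', and this induces a bijection between the blocks of G and the blocks of G' under which corresponding blocks have the same number of edges and the same maximum cycle length (with maximum cycle length 0 for blocks containing no cycle). -/

import Mathlib

attribute [local instance] Classical.propDecidable

/-- A cut vertex of (the graph represented by) a subgraph `B`: a vertex of `B` whose
deletion (together with all incident edges) disconnects `B`. -/
def SimpleGraph.Subgraph.IsCutVertex {V : Type*} {G : SimpleGraph V} (B : G.Subgraph)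
    (v : V) : Prop :=
  v ∈ B.verts ∧ ¬ (B.deleteVerts {v}).coe.Preconnected

/-- A block of `G`: an induced connected subgraph without cut vertices that is maximal
with this property. -/
def SimpleGraph.Subgraph.IsBlock {V : Type*} {G : SimpleGraph V} (B : G.Subgraph) : Prop :=
  B.IsInduced ∧ B.coe.Connected ∧ (∀ v, ¬ B.IsCutVertex v) ∧
    ∀ B' : G.Subgraph, B'.IsInduced → B'.coe.Connected → (∀ v, ¬ B'.IsCutVertex v) →
      B ≤ B' → B = B'

/-- The maximum length of a cycle all of whose edges lie in the subgraph `B`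
(`0` if there is no such cycle). -/
noncomputable def maxCycleLength {V : Type*} {G : SimpleGraph V} (B : G.Subgraph) : ℕ :=
  sSup {n : ℕ | ∃ u : V, ∃ c : G.Walk u u, c.IsCycle ∧
    (∀ f ∈ c.edges, f ∈ B.edgeSet) ∧ c.length = n}

open SimpleGraph

/-- The vertex map of the Type B Whitney flip: `v1 ↦ v2`, all other vertices fixed. -/
def tauB {V : Type*} [DecidableEq V] (v1 v2 : V) (x : V) : V :=
  if x = v1 then v2 else x

/-- The Type B Whitney flip of `G` along `(H, v1, v2)` (where `v2 ∉ H`): edges with both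
endpoints in `H` are mapped by `tauB v1 v2`; all other edges are kept. -/
def typeBFlip {V : Type*} [DecidableEq V] (G : SimpleGraph V) (v1 v2 : V) (H : Set V)
    (hv2 : v2 ∉ H) : SimpleGraph V where
  Adj a b :=
    (∃ x y : V, x ∈ H ∧ y ∈ H ∧ G.Adj x y ∧ a = tauB v1 v2 x ∧ b = tauB v1 v2 y) ∨
    (¬(a ∈ H ∧ b ∈ H) ∧ G.Adj a b)
  symm := by
    constructor
    rintro a b (⟨x, y, hx, hy, h, ha, hb⟩ | ⟨hn, h⟩)
    · exact Or.inl ⟨y, x, hy, hx, h.symm, hb, ha⟩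
    · exact Or.inr ⟨fun ⟨hb', ha'⟩ => hn ⟨ha', hb'⟩, h.symm⟩
  loopless := by
    constructor
    rintro a (⟨x, y, hx, hy, h, ha, hb⟩ | ⟨_, h⟩)
    · have hxy : tauB v1 v2 x = tauB v1 v2 y := ha ▸ hb
      unfold tauB at hxy
      split_ifs at hxy with hx1 hy1 hy1
      · exact h.ne (hx1.trans hy1.symm)
      · exact hv2 (hxy ▸ hy)
      · exact hv2 (hxy ▸ hx)
      · exact h.ne hxy
    · exact G.loopless.irrefl _ h

/-- The edge map of the Type B Whitney flip: an edge with both endpoints in `H` is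
mapped by `tauB v1 v2`; every other edge is fixed. -/
noncomputable def phiB {V : Type*} [DecidableEq V] (v1 v2 : V) (H : Set V)
    (e : Sym2 V) : Sym2 V :=
  if ∀ x ∈ e, x ∈ H then e.map (tauB v1 v2) else e

namespace WhitB

variable {V : Type*} [DecidableEq V]

lemma walk_crossing {α : Type*} {W : SimpleGraph α} {S : Set α} {u v : α}
    (p : W.Walk u v) (hu : u ∈ S) (hv : v ∉ S) :
    ∃ a b, W.Adj a b ∧ a ∈ S ∧ b ∉ S := by
  induction p with
  | nil => exact absurd hu hv
  | @cons u x v h q ih =>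
    by_cases hx : x ∈ S
    · exact ih hx hv
    · exact ⟨u, x, h, hu, hx⟩

lemma precon_of_subsingleton {α : Type*} (W : SimpleGraph α) (h : ∀ a b : α, a = b) :
    W.Preconnected := fun a b => (h a b) ▸ Reachable.refl a

section Tau

variable {v1 v2 : V} {H : Set V}

lemma tau_eq_of_ne {x : V} (hx : x ≠ v1) : tauB v1 v2 x = x := if_neg hx

@[simp] lemma tau_v1 : tauB v1 v2 v1 = v2 := if_pos rfl

lemma tau_mem (hv2 : v2 ∉ H) {x : V} (hx : x ∈ H) : tauB v1 v2 x ∈ (H \ {v1}) ∪ {v2} := by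
  by_cases h : x = v1
  · subst h; simp [tauB]
  · rw [tau_eq_of_ne h]
    have hxv2 : x ≠ v2 := fun h' => hv2 (h' ▸ hx)
    exact Or.inl ⟨hx, h⟩

lemma tau_injOn (hv2 : v2 ∉ H) : ∀ x ∈ H, ∀ y ∈ H, tauB v1 v2 x = tauB v1 v2 y → x = y := by
  intro x hx y hy hxy
  unfold tauB at hxy
  split_ifs at hxy with h h' h'
  · exact h.trans h'.symm
  · exact absurd (hxy ▸ hy) hv2
  · exact absurd (hxy ▸ hx) hv2
  · exact hxy

lemma tau'_tau (hv2 : v2 ∉ H) {x : V} (hx : x ∈ H) : tauB v2 v1 (tauB v1 v2 x) = x := by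
  by_cases h : x = v1
  · subst h; simp [tauB]
  · have hx2 : x ≠ v2 := fun h' => hv2 (h' ▸ hx)
    rw [tau_eq_of_ne h, tau_eq_of_ne hx2]

lemma tau_image (h1 : v1 ∈ H) (hv2 : v2 ∉ H) : tauB v1 v2 '' H = (H \ {v1}) ∪ {v2} := by
  apply Set.Subset.antisymm
  · rintro a ⟨x, hx, rfl⟩; exact tau_mem hv2 hx
  · rintro a (⟨ha, hne⟩ | ha)
    · exact ⟨a, ha, tau_eq_of_ne hne⟩
    · exact ⟨v1, h1, by simp only [Set.mem_singleton_iff] at ha; rw [ha]; simp⟩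

end Tau


/-- An induced connected subgraph without cut vertices. -/
def Good {W : Type*} {Γ : SimpleGraph W} (C : Γ.Subgraph) : Prop :=
  C.IsInduced ∧ C.coe.Connected ∧ ∀ v, ¬ C.IsCutVertex v

/-- Symmetric data package for a Type B Whitney flip. -/
structure FlipData (G G'' : SimpleGraph V) (v1 v2 : V) (H H' : Set V) : Prop where
  h1 : v1 ∈ H
  h2 : v2 ∈ H'
  hv2 : v2 ∉ H
  hv1 : v1 ∉ H'
  hH' : H' = (H \ {v1}) ∪ {v2}
  hHedge : ∀ x y, G.Adj x y → x ∈ H \ {v1} → y ∈ H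
  hCross : ∀ x y, G''.Adj x y → x ∈ H' \ {v2} → y ∈ H'
  hAdjIff : ∀ x y, x ∈ H → y ∈ H → (G''.Adj (tauB v1 v2 x) (tauB v1 v2 y) ↔ G.Adj x y)
  hBack : ∀ a b, a ∉ H \ {v1} → b ∉ H \ {v1} → (G.Adj a b ↔ G''.Adj a b)

namespace FlipData

variable {G G'' : SimpleGraph V} {v1 v2 : V} {H H' : Set V}

lemma hne (fd : FlipData G G'' v1 v2 H H') : v1 ≠ v2 := fun h => fd.hv1 (h ▸ fd.h2)

lemma diff_eq (fd : FlipData G G'' v1 v2 H H') : H' \ {v2} = H \ {v1} := by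
  rw [fd.hH']
  ext x
  constructor
  · rintro ⟨(h | h), hx⟩
    · exact h
    · exact absurd h hx
  · rintro ⟨hx, hne⟩
    exact ⟨Or.inl ⟨hx, hne⟩, fun h => fd.hv2 (h ▸ hx)⟩

lemma symm (fd : FlipData G G'' v1 v2 H H') : FlipData G'' G v2 v1 H' H where
  h1 := fd.h2
  h2 := fd.h1
  hv2 := fd.hv1
  hv1 := fd.hv2
  hH' := by
    rw [fd.diff_eq, Set.diff_union_self]
    exact (Set.union_eq_self_of_subset_right (Set.singleton_subset_iff.2 fd.h1)).symm
  hHedge := fd.hCross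
  hCross := fd.hHedge
  hAdjIff := by
    intro x y hx hy
    rw [fd.hH'] at hx hy
    have hx' : ∃ x0 ∈ H, tauB v1 v2 x0 = x := by
      rcases hx with ⟨hx, hne⟩ | hx
      · exact ⟨x, hx, tau_eq_of_ne hne⟩
      · simp only [Set.mem_singleton_iff] at hx
        exact ⟨v1, fd.h1, by rw [hx]; simp⟩
    have hy' : ∃ y0 ∈ H, tauB v1 v2 y0 = y := by
      rcases hy with ⟨hy, hne⟩ | hy
      · exact ⟨y, hy, tau_eq_of_ne hne⟩
      · simp only [Set.mem_singleton_iff] at hy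
        exact ⟨v1, fd.h1, by rw [hy]; simp⟩
    obtain ⟨x0, hx0, rfl⟩ := hx'
    obtain ⟨y0, hy0, rfl⟩ := hy'
    rw [tau'_tau fd.hv2 hx0, tau'_tau fd.hv2 hy0]
    exact (fd.hAdjIff x0 y0 hx0 hy0).symm
  hBack := by
    intro a b ha hb
    rw [fd.diff_eq] at ha hb
    exact (fd.hBack a b ha hb).symm

/-- The image of a subgraph with vertices inside `H` under the flip. -/
def flipSubIn (fd : FlipData G G'' v1 v2 H H') (C : G.Subgraph) (h : C.verts ⊆ H) :
    G''.Subgraph where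
  verts := tauB v1 v2 '' C.verts
  Adj a b := ∃ x y, C.Adj x y ∧ a = tauB v1 v2 x ∧ b = tauB v1 v2 y
  adj_sub := by
    rintro a b ⟨x, y, hxy, rfl, rfl⟩
    exact (fd.hAdjIff x y (h (C.edge_vert hxy)) (h (C.edge_vert hxy.symm))).2 (C.adj_sub hxy)
  edge_vert := by
    rintro a b ⟨x, y, hxy, rfl, rfl⟩
    exact ⟨x, C.edge_vert hxy, rfl⟩
  symm := by
    constructor
    rintro a b ⟨x, y, hxy, rfl, rfl⟩
    exact ⟨y, x, hxy.symm, rfl, rfl⟩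

/-- A subgraph kept unchanged, viewed in the flipped graph. -/
def keepSub {W : Type*} {Γ Γ' : SimpleGraph W} (C : Γ.Subgraph)
    (h2 : ∀ a b, C.Adj a b → Γ'.Adj a b) : Γ'.Subgraph where
  verts := C.verts
  Adj := C.Adj
  adj_sub := h2 _ _
  edge_vert := C.edge_vert
  symm := C.symm

/-- The flip of a subgraph. -/
noncomputable def flipSub (fd : FlipData G G'' v1 v2 H H') (C : G.Subgraph) : G''.Subgraph :=
  if h : C.verts ⊆ H then fd.flipSubIn C h
  else if h2 : ∀ a b, C.Adj a b → G''.Adj a b then keepSub C h2 else ⊥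

/-- Purity: a connected subgraph without cut vertices not contained in `H`
avoids `H \ {v1}`. -/
lemma purity (fd : FlipData G G'' v1 v2 H H') {C : G.Subgraph}
    (hconn : C.coe.Connected) (hcut : ∀ v, ¬ C.IsCutVertex v) (hns : ¬ C.verts ⊆ H) :
    ∀ x ∈ C.verts, x ∉ H \ {v1} := by
  intro y hy hyH
  obtain ⟨w, hw, hwH⟩ := Set.not_subset.1 hns
  have hyne : y ≠ v1 := fun h => hyH.2 h
  -- find a crossing edge, whose `H`-endpoint must be `v1`
  obtain ⟨p⟩ := hconn.preconnected ⟨y, hy⟩ ⟨w, hw⟩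
  obtain ⟨a, b, hab, haH, hbH⟩ :=
    walk_crossing (S := {z : C.verts | (z : V) ∈ H}) p hyH.1 hwH
  have habC : C.Adj (a : V) (b : V) := hab
  have hav1 : (a : V) = v1 := by
    by_contra hne
    exact hbH (fd.hHedge _ _ (C.adj_sub habC) ⟨haH, hne⟩)
  have hv1C : v1 ∈ C.verts := hav1 ▸ a.2
  refine hcut v1 ⟨hv1C, fun hpre => ?_⟩
  have hymem : y ∈ (C.deleteVerts {v1}).verts := ⟨hy, fun h => hyne h⟩
  have hwmem : w ∈ (C.deleteVerts {v1}).verts :=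
    ⟨hw, fun h => hwH (by rw [Set.mem_singleton_iff] at h; exact h ▸ fd.h1)⟩
  obtain ⟨q⟩ := hpre ⟨y, hymem⟩ ⟨w, hwmem⟩
  obtain ⟨a', b', hab', haH', hbH'⟩ :=
    walk_crossing (S := {z : (C.deleteVerts {v1}).verts | (z : V) ∈ H}) q hyH.1 hwH
  have habC' : (C.deleteVerts {v1}).Adj (a' : V) (b' : V) := hab'
  rw [Subgraph.deleteVerts_adj] at habC'
  exact hbH' (fd.hHedge _ _ (C.adj_sub habC'.2.2.2.2) ⟨haH', fun h => habC'.2.1 h⟩)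

lemma flipSub_of_subset (fd : FlipData G G'' v1 v2 H H') {C : G.Subgraph}
    (h : C.verts ⊆ H) : fd.flipSub C = fd.flipSubIn C h := dif_pos h

lemma keep_adj (fd : FlipData G G'' v1 v2 H H') {C : G.Subgraph}
    (hconn : C.coe.Connected) (hcut : ∀ v, ¬ C.IsCutVertex v) (hns : ¬ C.verts ⊆ H) :
    ∀ a b, C.Adj a b → G''.Adj a b := by
  intro a b hab
  exact (fd.hBack a b (fd.purity hconn hcut hns a (C.edge_vert hab))
    (fd.purity hconn hcut hns b (C.edge_vert hab.symm))).1 (C.adj_sub hab)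

lemma flipSub_of_not_subset (fd : FlipData G G'' v1 v2 H H') {C : G.Subgraph}
    (hconn : C.coe.Connected) (hcut : ∀ v, ¬ C.IsCutVertex v) (hns : ¬ C.verts ⊆ H) :
    fd.flipSub C = keepSub C (fd.keep_adj hconn hcut hns) := by
  rw [flipSub, dif_neg hns, dif_pos (fd.keep_adj hconn hcut hns)]

/-- The isomorphism between a subgraph inside `H` and its flip. -/
noncomputable def isoIn (fd : FlipData G G'' v1 v2 H H') (C : G.Subgraph)
    (h : C.verts ⊆ H) : C.coe ≃g (fd.flipSubIn C h).coe where
  toEquiv := Equiv.ofBijective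
    (fun x => (⟨tauB v1 v2 (x : V), ⟨(x : V), x.2, rfl⟩⟩ : (fd.flipSubIn C h).verts))
    (by
      constructor
      · intro x y hxy
        apply Subtype.ext
        exact tau_injOn fd.hv2 _ (h x.2) _ (h y.2) (congrArg Subtype.val hxy)
      · rintro ⟨a, x, hx, rfl⟩
        exact ⟨⟨x, hx⟩, rfl⟩)
  map_rel_iff' := by
    intro a b
    simp only [Equiv.ofBijective_apply, Subgraph.coe_adj]
    constructor
    · rintro ⟨x, y, hxy, hx, hy⟩
      have hx' : x = (a : V) :=
        tau_injOn fd.hv2 _ (h (C.edge_vert hxy)) _ (h a.2) hx.symm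
      have hy' : y = (b : V) :=
        tau_injOn fd.hv2 _ (h (C.edge_vert hxy.symm)) _ (h b.2) hy.symm
      exact hx' ▸ hy' ▸ hxy
    · intro hab
      exact ⟨(a : V), (b : V), hab, rfl, rfl⟩

lemma flipSubIn_deleteVerts (fd : FlipData G G'' v1 v2 H H') {C : G.Subgraph}
    (h : C.verts ⊆ H) {x : V} (hx : x ∈ H) :
    (fd.flipSubIn C h).deleteVerts {tauB v1 v2 x} =
      fd.flipSubIn (C.deleteVerts {x}) (fun z hz => h hz.1) := by
  ext a b
  · constructor
    · rintro ⟨⟨z, hz, rfl⟩, hne⟩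
      refine ⟨z, ⟨hz, fun hzx => ?_⟩, rfl⟩
      rw [Set.mem_singleton_iff] at hzx
      exact hne (Set.mem_singleton_iff.2 (by rw [hzx]))
    · rintro ⟨z, ⟨hz, hzx⟩, rfl⟩
      refine ⟨⟨z, hz, rfl⟩, fun hne => hzx ?_⟩
      rw [Set.mem_singleton_iff] at hne
      rw [Set.mem_singleton_iff]
      exact tau_injOn fd.hv2 _ (h hz) _ hx hne
  · rw [Subgraph.deleteVerts_adj]
    constructor
    · rintro ⟨ha, hane, hb, hbne, z, w, hzw, rfl, rfl⟩
      refine ⟨z, w, ?_, rfl, rfl⟩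
      rw [Subgraph.deleteVerts_adj]
      refine ⟨C.edge_vert hzw, fun hzx => ?_, C.edge_vert hzw.symm, fun hwx => ?_, hzw⟩
      · rw [Set.mem_singleton_iff] at hzx
        exact hane (Set.mem_singleton_iff.2 (by rw [hzx]))
      · rw [Set.mem_singleton_iff] at hwx
        exact hbne (Set.mem_singleton_iff.2 (by rw [hwx]))
    · rintro ⟨z, w, hzw, rfl, rfl⟩
      rw [Subgraph.deleteVerts_adj] at hzw
      obtain ⟨hz, hzx, hw, hwx, hzw⟩ := hzw
      refine ⟨⟨z, hz, rfl⟩, fun hne => hzx ?_, ⟨w, hw, rfl⟩, fun hne => hwx ?_, z, w, hzw, rfl, rfl⟩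
      · rw [Set.mem_singleton_iff] at hne ⊢
        exact tau_injOn fd.hv2 _ (h hz) _ hx hne
      · rw [Set.mem_singleton_iff] at hne ⊢
        exact tau_injOn fd.hv2 _ (h hw) _ hx hne

lemma good_flipSubIn (fd : FlipData G G'' v1 v2 H H') {C : G.Subgraph}
    (h : C.verts ⊆ H) (hg : Good C) : Good (fd.flipSubIn C h) := by
  obtain ⟨hind, hconn, hcut⟩ := hg
  refine ⟨?_, ?_, ?_⟩
  · rintro v ⟨x, hx, rfl⟩ w ⟨y, hy, rfl⟩ hadj
    exact ⟨x, y, hind hx hy ((fd.hAdjIff x y (h hx) (h hy)).1 hadj), rfl, rfl⟩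
  · exact (fd.isoIn C h).connected_iff.1 hconn
  · rintro v ⟨⟨x, hx, rfl⟩, hnpre⟩
    apply hnpre
    rw [fd.flipSubIn_deleteVerts h (h hx)]
    have hpre : (C.deleteVerts {x}).coe.Preconnected := by
      by_contra hP
      exact hcut x ⟨hx, hP⟩
    exact (fd.isoIn (C.deleteVerts {x}) (fun z hz => h hz.1)).preconnected_iff.1 hpre

lemma good_keepSub {W : Type*} {Γ Γ' : SimpleGraph W} {C : Γ.Subgraph}
    (h2 : ∀ a b, C.Adj a b → Γ'.Adj a b)
    (hind' : (keepSub (Γ' := Γ') C h2).IsInduced)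
    (hg : Good C) : Good (keepSub (Γ' := Γ') C h2) := by
  obtain ⟨hind, hconn, hcut⟩ := hg
  refine ⟨hind', ?_, ?_⟩
  · exact hconn
  · rintro v ⟨hv, hnpre⟩
    apply hnpre
    by_contra hP
    exact hcut v ⟨hv, hP⟩

lemma keepSub_isInduced (fd : FlipData G G'' v1 v2 H H') {C : G.Subgraph}
    (hg : Good C) (hns : ¬ C.verts ⊆ H) :
    (keepSub C (fd.keep_adj hg.2.1 hg.2.2 hns)).IsInduced := by
  intro a ha b hb hadj
  exact hg.1 ha hb ((fd.hBack a b (fd.purity hg.2.1 hg.2.2 hns a ha)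
    (fd.purity hg.2.1 hg.2.2 hns b hb)).2 hadj)

lemma good_flipSub (fd : FlipData G G'' v1 v2 H H') {C : G.Subgraph}
    (hg : Good C) : Good (fd.flipSub C) := by
  by_cases h : C.verts ⊆ H
  · rw [fd.flipSub_of_subset h]
    exact fd.good_flipSubIn h hg
  · rw [fd.flipSub_of_not_subset hg.2.1 hg.2.2 h]
    exact good_keepSub _ (fd.keepSub_isInduced hg h) hg

lemma edgeSet_keepSub {W : Type*} {Γ Γ' : SimpleGraph W} {C : Γ.Subgraph}
    (h2 : ∀ a b, C.Adj a b → Γ'.Adj a b) :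
    (keepSub (Γ' := Γ') C h2).edgeSet = C.edgeSet := rfl

lemma edgeSet_flipSubIn (fd : FlipData G G'' v1 v2 H H') {C : G.Subgraph}
    (h : C.verts ⊆ H) :
    (fd.flipSubIn C h).edgeSet = Sym2.map (tauB v1 v2) '' C.edgeSet := by
  ext e
  refine Sym2.ind (fun a b => ?_) e
  constructor
  · rintro (⟨x, y, hxy, rfl, rfl⟩ : (fd.flipSubIn C h).Adj a b)
    exact ⟨s(x, y), hxy, Sym2.map_pair_eq _ _ _⟩
  · rintro ⟨e', he', hmap⟩
    revert he' hmap
    refine Sym2.ind (fun x y he' hmap => ?_) e'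
    rw [Sym2.map_pair_eq, Sym2.eq_iff] at hmap
    have hxy : C.Adj x y := he'
    rcases hmap with ⟨ha, hb⟩ | ⟨ha, hb⟩
    · exact (⟨x, y, hxy, ha.symm, hb.symm⟩ : (fd.flipSubIn C h).Adj a b)
    · exact (⟨y, x, hxy.symm, hb.symm, ha.symm⟩ : (fd.flipSubIn C h).Adj a b)

lemma edge_flipSub (fd : FlipData G G'' v1 v2 H H') {C : G.Subgraph}
    (hg : Good C) (he : C.edgeSet.Nonempty) : (fd.flipSub C).edgeSet.Nonempty := by
  by_cases h : C.verts ⊆ H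
  · rw [fd.flipSub_of_subset h, fd.edgeSet_flipSubIn h]
    exact he.image _
  · rw [fd.flipSub_of_not_subset hg.2.1 hg.2.2 h, edgeSet_keepSub]
    exact he

lemma verts_subset_of_subset (fd : FlipData G G'' v1 v2 H H') {C : G.Subgraph}
    (h : C.verts ⊆ H) : (fd.flipSubIn C h).verts ⊆ H' := by
  rintro a ⟨x, hx, rfl⟩
  rw [fd.hH']
  exact tau_mem fd.hv2 (h hx)

/-- A subgraph with an edge avoiding `H \ {v1}` is not inside `H'`. -/
lemma not_subset_H' (fd : FlipData G G'' v1 v2 H H') {S : Set V}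
    (hpure : ∀ x ∈ S, x ∉ H \ {v1}) {x y : V} (hx : x ∈ S) (hy : y ∈ S)
    (hne : x ≠ y) : ¬ S ⊆ H' := by
  intro hsub
  have hx' : x = v2 := by
    have := hsub hx
    rw [fd.hH'] at this
    rcases this with h' | h'
    · exact absurd h' (hpure x hx)
    · exact h'
  have hy' : y = v2 := by
    have := hsub hy
    rw [fd.hH'] at this
    rcases this with h' | h'
    · exact absurd h' (hpure y hy)
    · exact h'
  exact hne (hx'.trans hy'.symm)

lemma flipSub_flipSub (fd : FlipData G G'' v1 v2 H H') {C : G.Subgraph}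
    (hg : Good C) (he : C.edgeSet.Nonempty) : fd.symm.flipSub (fd.flipSub C) = C := by
  obtain ⟨e, hee⟩ := he
  obtain ⟨x, y, hxy, hxyne⟩ : ∃ x y, C.Adj x y ∧ x ≠ y := by
    revert hee
    refine Sym2.ind (fun x y hee => ?_) e
    exact ⟨x, y, hee, (C.adj_sub hee).ne⟩
  by_cases h : C.verts ⊆ H
  · rw [fd.flipSub_of_subset h,
      fd.symm.flipSub_of_subset (fd.verts_subset_of_subset h)]
    ext a b
    · constructor
      · rintro ⟨z, ⟨w, hw, rfl⟩, rfl⟩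
        rw [tau'_tau fd.hv2 (h hw)]
        exact hw
      · intro ha
        exact ⟨tauB v1 v2 a, ⟨a, ha, rfl⟩, tau'_tau fd.hv2 (h ha)⟩
    · constructor
      · rintro ⟨z, w, ⟨p, q, hpq, rfl, rfl⟩, rfl, rfl⟩
        rw [tau'_tau fd.hv2 (h (C.edge_vert hpq)),
          tau'_tau fd.hv2 (h (C.edge_vert hpq.symm))]
        exact hpq
      · intro hab
        exact ⟨tauB v1 v2 a, tauB v1 v2 b, ⟨a, b, hab, rfl, rfl⟩,
          (tau'_tau fd.hv2 (h (C.edge_vert hab))).symm,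
          (tau'_tau fd.hv2 (h (C.edge_vert hab.symm))).symm⟩
  · have hk := fd.flipSub_of_not_subset hg.2.1 hg.2.2 h
    have hgF := fd.good_flipSub hg
    rw [hk] at hgF ⊢
    have hns' : ¬ (keepSub C (fd.keep_adj hg.2.1 hg.2.2 h)).verts ⊆ H' :=
      fd.not_subset_H' (fd.purity hg.2.1 hg.2.2 h) (C.edge_vert hxy)
        (C.edge_vert hxy.symm) hxyne
    rw [fd.symm.flipSub_of_not_subset hgF.2.1 hgF.2.2 hns']
    rfl

lemma le_flipSub (fd : FlipData G G'' v1 v2 H H') {B : G.Subgraph} {C' : G''.Subgraph}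
    (hgB : Good B) (heB : B.edgeSet.Nonempty) (hgC : Good C')
    (hle : fd.flipSub B ≤ C') : B ≤ fd.symm.flipSub C' := by
  obtain ⟨e, hee⟩ := heB
  obtain ⟨x, y, hxy, hxyne⟩ : ∃ x y, B.Adj x y ∧ x ≠ y := by
    revert hee
    refine Sym2.ind (fun x y hee => ?_) e
    exact ⟨x, y, hee, (B.adj_sub hee).ne⟩
  by_cases hB : B.verts ⊆ H
  · rw [fd.flipSub_of_subset hB] at hle
    by_cases hC : C'.verts ⊆ H'
    · rw [fd.symm.flipSub_of_subset hC]
      constructor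
      · intro z hz
        exact ⟨tauB v1 v2 z, hle.1 ⟨z, hz, rfl⟩, tau'_tau fd.hv2 (hB hz)⟩
      · intro z w hzw
        exact ⟨tauB v1 v2 z, tauB v1 v2 w, hle.2 ⟨z, w, hzw, rfl, rfl⟩,
          (tau'_tau fd.hv2 (hB (B.edge_vert hzw))).symm,
          (tau'_tau fd.hv2 (hB (B.edge_vert hzw.symm))).symm⟩
    · exfalso
      have hpure := fd.symm.purity hgC.2.1 hgC.2.2 hC
      have hx' : tauB v1 v2 x ∈ C'.verts := hle.1 ⟨x, B.edge_vert hxy, rfl⟩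
      have hy' : tauB v1 v2 y ∈ C'.verts := hle.1 ⟨y, B.edge_vert hxy.symm, rfl⟩
      have hd := fd.diff_eq
      have hxv2 : tauB v1 v2 x = v2 := by
        have hmem : tauB v1 v2 x ∈ H' := by
          rw [fd.hH']; exact tau_mem fd.hv2 (hB (B.edge_vert hxy))
        by_contra hne
        exact (hpure _ hx') ⟨hmem, hne⟩
      have hyv2 : tauB v1 v2 y = v2 := by
        have hmem : tauB v1 v2 y ∈ H' := by
          rw [fd.hH']; exact tau_mem fd.hv2 (hB (B.edge_vert hxy.symm))
        by_contra hne
        exact (hpure _ hy') ⟨hmem, hne⟩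
      exact hxyne (tau_injOn fd.hv2 _ (hB (B.edge_vert hxy)) _
        (hB (B.edge_vert hxy.symm)) (hxv2.trans hyv2.symm))
  · rw [fd.flipSub_of_not_subset hgB.2.1 hgB.2.2 hB] at hle
    by_cases hC : C'.verts ⊆ H'
    · exfalso
      have hpure := fd.purity hgB.2.1 hgB.2.2 hB
      exact fd.not_subset_H' hpure (B.edge_vert hxy) (B.edge_vert hxy.symm) hxyne
        (fun z hz => hC (hle.1 hz))
    · rw [fd.symm.flipSub_of_not_subset hgC.2.1 hgC.2.2 hC]
      exact ⟨hle.1, hle.2⟩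

lemma isBlock_flipSub (fd : FlipData G G'' v1 v2 H H') {B : G.Subgraph}
    (hB : B.IsBlock) (heB : B.edgeSet.Nonempty) : (fd.flipSub B).IsBlock := by
  obtain ⟨hind, hconn, hcut, hmax⟩ := hB
  have hgB : Good B := ⟨hind, hconn, hcut⟩
  have hgF := fd.good_flipSub hgB
  refine ⟨hgF.1, hgF.2.1, hgF.2.2, ?_⟩
  intro C' hC'i hC'c hC'cut hle
  have hgC : Good C' := ⟨hC'i, hC'c, hC'cut⟩
  have hgC'' := fd.symm.good_flipSub hgC
  have hBle : B ≤ fd.symm.flipSub C' := fd.le_flipSub hgB heB hgC hle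
  have hBeq : B = fd.symm.flipSub C' := hmax _ hgC''.1 hgC''.2.1 hgC''.2.2 hBle
  have heC : C'.edgeSet.Nonempty := by
    obtain ⟨e, hee⟩ := fd.edge_flipSub hgB heB
    refine ⟨e, ?_⟩
    revert hee
    refine Sym2.ind (fun x y hee => ?_) e
    exact hle.2 hee
  have hrt := fd.symm.flipSub_flipSub hgC heC
  rw [hBeq]
  exact hrt

/-- The set of lengths of cycles with edges in `B`. -/
def cycSet {W : Type*} {Γ : SimpleGraph W} (B : Γ.Subgraph) : Set ℕ :=
  {n : ℕ | ∃ u : W, ∃ c : Γ.Walk u u, c.IsCycle ∧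
    (∀ f ∈ c.edges, f ∈ B.edgeSet) ∧ c.length = n}

lemma edgeSet_spanningCoe {W : Type*} {Γ : SimpleGraph W} (D : Γ.Subgraph) :
    D.spanningCoe.edgeSet = D.edgeSet := by
  ext e
  refine Sym2.ind (fun x y => ?_) e
  rw [SimpleGraph.mem_edgeSet]
  exact Iff.rfl

lemma swap_eq_tau {v1 v2 : V} {H : Set V} (hv2 : v2 ∉ H) {a : V} (ha : a ∈ H) :
    Equiv.swap v1 v2 a = tauB v1 v2 a := by
  by_cases h : a = v1
  · subst h; rw [Equiv.swap_apply_left]; simp [tauB]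
  · have hne2 : a ≠ v2 := by rintro rfl; exact hv2 ha
    rw [Equiv.swap_apply_of_ne_of_ne h hne2, tau_eq_of_ne h]

lemma cycSet_subset (fd : FlipData G G'' v1 v2 H H') {C : G.Subgraph}
    (hg : Good C) : cycSet C ⊆ cycSet (fd.flipSub C) := by
  rintro n ⟨u, c, hc, hce, rfl⟩
  by_cases h : C.verts ⊆ H
  · rw [fd.flipSub_of_subset h]
    have h1 : ∀ e ∈ c.edges, e ∈ C.spanningCoe.edgeSet := by
      intro e he; rw [edgeSet_spanningCoe]; exact hce e he
    let c1 := c.transfer C.spanningCoe h1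
    have hc1 : c1.IsCycle := hc.transfer h1
    let f : C.spanningCoe →g (fd.flipSubIn C h).spanningCoe :=
      { toFun := Equiv.swap v1 v2
        map_rel' := by
          intro a b hab
          have ha : a ∈ C.verts := C.edge_vert hab
          have hb : b ∈ C.verts := C.edge_vert hab.symm
          show (fd.flipSubIn C h).Adj _ _
          rw [swap_eq_tau fd.hv2 (h ha), swap_eq_tau fd.hv2 (h hb)]
          exact ⟨a, b, hab, rfl, rfl⟩ }
    let c2 := c1.map f
    have hc2 : c2.IsCycle := hc1.map (Equiv.swap v1 v2).injective
    have h3 : ∀ e ∈ c2.edges, e ∈ G''.edgeSet := by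
      intro e he
      have h4 := c2.edges_subset_edgeSet he
      revert h4
      refine Sym2.ind (fun x y h4 => ?_) e
      rw [SimpleGraph.mem_edgeSet] at h4 ⊢
      exact (fd.flipSubIn C h).spanningCoe_le h4
    refine ⟨_, c2.transfer G'' h3, hc2.transfer h3, ?_, ?_⟩
    · intro e he
      rw [Walk.edges_transfer] at he
      rw [← edgeSet_spanningCoe]
      exact c2.edges_subset_edgeSet he
    · rw [Walk.length_transfer, Walk.length_map, Walk.length_transfer]
  · rw [fd.flipSub_of_not_subset hg.2.1 hg.2.2 h]
    have h3 : ∀ e ∈ c.edges, e ∈ G''.edgeSet := by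
      intro e he
      have hce' := hce e he
      revert hce'
      refine Sym2.ind (fun x y hce' => ?_) e
      exact (fd.keep_adj hg.2.1 hg.2.2 h) x y hce'
    refine ⟨u, c.transfer G'' h3, hc.transfer h3, ?_, Walk.length_transfer _ _⟩
    intro e he
    rw [Walk.edges_transfer] at he
    rw [edgeSet_keepSub]
    exact hce e he

lemma cycSet_eq (fd : FlipData G G'' v1 v2 H H') {C : G.Subgraph}
    (hg : Good C) (he : C.edgeSet.Nonempty) : cycSet (fd.flipSub C) = cycSet C := by
  apply Set.Subset.antisymm
  · have h2 := fd.symm.cycSet_subset (fd.good_flipSub hg)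
    rw [fd.flipSub_flipSub hg he] at h2
    exact h2
  · exact fd.cycSet_subset hg

lemma bijOn_phiB (fd : FlipData G G'' v1 v2 H H') {C : G.Subgraph}
    (hg : Good C) : Set.BijOn (phiB v1 v2 H) C.edgeSet (fd.flipSub C).edgeSet := by
  by_cases h : C.verts ⊆ H
  · rw [fd.flipSub_of_subset h, fd.edgeSet_flipSubIn h]
    have heq : Set.EqOn (Sym2.map (tauB v1 v2)) (phiB v1 v2 H) C.edgeSet := by
      intro e he
      have hcond : ∀ x ∈ e, x ∈ H := fun x hx =>
        h (Subgraph.mem_verts_of_mem_edge he hx)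
      rw [phiB, if_pos hcond]
    refine Set.BijOn.congr ?_ heq
    apply Set.InjOn.bijOn_image
    intro e he e' he' hmap
    induction e using Sym2.ind with | _ x y => ?_
    induction e' using Sym2.ind with | _ x' y' => ?_
    rw [Sym2.map_pair_eq, Sym2.map_pair_eq, Sym2.eq_iff] at hmap
    have hx : x ∈ H := h (C.edge_vert he)
    have hy : y ∈ H := h (C.edge_vert (Subgraph.mem_edgeSet.1 he).symm)
    have hx' : x' ∈ H := h (C.edge_vert he')
    have hy' : y' ∈ H := h (C.edge_vert (Subgraph.mem_edgeSet.1 he').symm)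
    rw [Sym2.eq_iff]
    rcases hmap with ⟨ha, hb⟩ | ⟨ha, hb⟩
    · exact Or.inl ⟨tau_injOn fd.hv2 _ hx _ hx' ha, tau_injOn fd.hv2 _ hy _ hy' hb⟩
    · exact Or.inr ⟨tau_injOn fd.hv2 _ hx _ hy' ha, tau_injOn fd.hv2 _ hy _ hx' hb⟩
  · rw [fd.flipSub_of_not_subset hg.2.1 hg.2.2 h, edgeSet_keepSub]
    have heq : Set.EqOn id (phiB v1 v2 H) C.edgeSet := by
      intro e he
      have hcond : ¬ ∀ x ∈ e, x ∈ H := by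
        intro hcond
        revert he hcond
        refine Sym2.ind (fun x y he hcond => ?_) e
        have hx := fd.purity hg.2.1 hg.2.2 h x (C.edge_vert he)
        have hy := fd.purity hg.2.1 hg.2.2 h y
          (C.edge_vert (Subgraph.mem_edgeSet.1 he).symm)
        have hx1 : x = v1 := by
          by_contra hne
          exact hx ⟨hcond x (Sym2.mem_mk_left x y), hne⟩
        have hy1 : y = v1 := by
          by_contra hne
          exact hy ⟨hcond y (Sym2.mem_mk_right x y), hne⟩
        exact (C.adj_sub he).ne (hx1.trans hy1.symm)
      rw [phiB, if_neg hcond]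
      rfl
    exact Set.BijOn.congr (Set.bijOn_id _) heq

end FlipData

lemma isBlock_edgeSet_nonempty {W : Type*} {Γ : SimpleGraph W}
    (hconn : Γ.Connected) (he : Γ.edgeSet.Nonempty) {B : Γ.Subgraph}
    (hB : B.IsBlock) : B.edgeSet.Nonempty := by
  by_contra hne
  have hnoadj : ∀ x y, ¬ B.Adj x y := fun x y h => hne ⟨s(x, y), h⟩
  obtain ⟨⟨u, hu⟩⟩ := hB.2.1.nonempty
  -- `u` has a neighbor in `Γ`
  obtain ⟨w, hw⟩ : ∃ w, Γ.Adj u w := by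
    obtain ⟨e, hee⟩ := he
    revert hee
    refine Sym2.ind (fun a b hee => ?_) e
    rw [SimpleGraph.mem_edgeSet] at hee
    obtain ⟨p⟩ := hconn.preconnected u a
    cases p with
    | nil => exact ⟨b, hee⟩
    | cons h q => exact ⟨_, h⟩
  -- all vertices of `B` equal `u`
  have hsing : ∀ x ∈ B.verts, x = u := by
    intro x hx
    obtain ⟨p⟩ := hB.2.1.preconnected ⟨x, hx⟩ ⟨u, hu⟩
    cases p with
    | nil => rfl
    | cons h q => exact absurd h (hnoadj _ _)
  have hC := hB.2.2.2 (Γ.subgraphOfAdj hw)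
  have hCind : (Γ.subgraphOfAdj hw).IsInduced := by
    intro a ha b hb hab
    rcases ha with ha | ha <;> rcases hb with hb | hb <;>
      simp -failIfUnchanged only [Set.mem_singleton_iff] at * <;> subst ha <;> subst hb
    · exact absurd rfl hab.ne
    · simp
    · simp [Sym2.eq_swap]
    · exact absurd rfl hab.ne
  have hCconn : (Γ.subgraphOfAdj hw).coe.Connected :=
    (Subgraph.subgraphOfAdj_connected hw).coe
  have hCcut : ∀ v, ¬ (Γ.subgraphOfAdj hw).IsCutVertex v := by
    rintro v ⟨hv, hnpre⟩
    apply hnpre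
    apply precon_of_subsingleton
    rintro ⟨a, ha, hanev⟩ ⟨b, hb, hbnev⟩
    apply Subtype.ext
    show a = b
    simp only [subgraphOfAdj_verts, Set.mem_insert_iff, Set.mem_singleton_iff,
      Set.mem_singleton_iff] at ha hb hanev hbnev
    rcases hv with hv | hv
    · rcases ha with ha | ha
      · exact absurd (ha.trans hv.symm) hanev
      · rcases hb with hb | hb
        · exact absurd (hb.trans hv.symm) hbnev
        · exact ha.trans hb.symm
    · simp only [Set.mem_singleton_iff] at hv
      rcases ha with ha | ha
      · rcases hb with hb | hb
        · exact ha.trans hb.symm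
        · exact absurd (hb.trans hv.symm) hbnev
      · exact absurd (ha.trans hv.symm) hanev
  have hle : B ≤ Γ.subgraphOfAdj hw := by
    constructor
    · intro x hx
      rw [hsing x hx]
      exact Or.inl rfl
    · intro x y hxy
      exact absurd hxy (hnoadj x y)
  have hBeq := hB.2.2.2 _ hCind hCconn hCcut hle
  have hwB : w ∈ B.verts := by
    rw [hBeq]
    exact Or.inr rfl
  exact hw.ne' (hsing w hwB)

lemma good_of_isBlock {W : Type*} {Γ : SimpleGraph W} {B : Γ.Subgraph}
    (hB : B.IsBlock) : Good B := ⟨hB.1, hB.2.1, hB.2.2.1⟩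

lemma maxCycleLength_eq {W : Type*} {Γ : SimpleGraph W} (B : Γ.Subgraph) :
    maxCycleLength B = sSup (FlipData.cycSet B) := rfl

end WhitB

open WhitB WhitB.FlipData in



/-- for a connected simple graph `G` with at least one edge, the edge map
`phiB` of the Type B Whitney flip maps the edge set of each block of `G` bijectively onto
the edge set of a block of the flipped graph, inducing a bijection between blocks which
preserves the number of edges and the maximum cycle length. -/
theorem typeBFlip_block_bijection {V : Type*} [Fintype V] [DecidableEq V]
    (G : SimpleGraph V) (hGconn : G.Connected) (hGedge : G.edgeSet.Nonempty)
    (v1 v2 : V) (hadj : G.Adj v1 v2)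
    (H : Set V) (h1 : v1 ∈ H) (hv2 : v2 ∉ H) (hHconn : (G.induce H).Connected)
    (hHedge : ∀ x y : V, G.Adj x y → x ∈ H \ ({v1} : Set V) → y ∈ H) :
    (∀ B : G.Subgraph, B.IsBlock → ∃ B' : (typeBFlip G v1 v2 H hv2).Subgraph, B'.IsBlock ∧
        Set.BijOn (phiB v1 v2 H) B.edgeSet B'.edgeSet) ∧
      ∃ F : {B : G.Subgraph // B.IsBlock} ≃
          {B' : (typeBFlip G v1 v2 H hv2).Subgraph // B'.IsBlock},
        ∀ B : {B : G.Subgraph // B.IsBlock},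
          Set.BijOn (phiB v1 v2 H) B.1.edgeSet (F B).1.edgeSet ∧
          B.1.edgeSet.ncard = (F B).1.edgeSet.ncard ∧
          maxCycleLength B.1 = maxCycleLength (F B).1 := by
  classical
  set G' := typeBFlip G v1 v2 H hv2 with hG'
  set H' : Set V := (H \ {v1}) ∪ {v2} with hH'def
  have hne12 : v1 ≠ v2 := hadj.ne
  have fd : FlipData G G' v1 v2 H H' := by
    refine ⟨h1, Or.inr rfl, hv2, ?_, rfl, fun x y h hx => hHedge x y h hx, ?_, ?_, ?_⟩
    · rintro (⟨_, h⟩ | h)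
      · exact h rfl
      · exact hne12 h
    · -- hCross
      intro x y hxy hx
      have hx' : x ∈ H \ {v1} := by
        rcases hx.1 with h | h
        · exact h
        · exact absurd h hx.2
      rcases hxy with ⟨a, b, ha, hb, hab, hxa, hyb⟩ | ⟨hn, hadj'⟩
      · exact hyb ▸ tau_mem hv2 hb
      · exact absurd ⟨hx'.1, hHedge x y hadj' hx'⟩ hn
    · -- hAdjIff
      intro x y hx hy
      constructor
      · rintro (⟨a, b, ha, hb, hab, hxa, hyb⟩ | ⟨hn, hadj'⟩)
        · rw [tau_injOn hv2 x hx a ha hxa, tau_injOn hv2 y hy b hb hyb]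
          exact hab
        · by_cases hx1 : x = v1 <;> by_cases hy1 : y = v1
          · subst hx1; subst hy1; exact absurd rfl hadj'.ne
          · exfalso
            subst hx1
            rw [tau_v1, tau_eq_of_ne hy1] at hadj'
            exact hv2 (hHedge y v2 hadj'.symm ⟨hy, hy1⟩)
          · exfalso
            subst hy1
            rw [tau_v1, tau_eq_of_ne hx1] at hadj'
            exact hv2 (hHedge x v2 hadj' ⟨hx, hx1⟩)
          · rw [tau_eq_of_ne hx1, tau_eq_of_ne hy1] at hadj'
            exact hadj'
      · intro h
        exact Or.inl ⟨x, y, hx, hy, h, rfl, rfl⟩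
    · -- hBack
      intro a b ha hb
      constructor
      · intro h
        refine Or.inr ⟨?_, h⟩
        rintro ⟨haH, hbH⟩
        have ha1 : a = v1 := by by_contra h'; exact ha ⟨haH, h'⟩
        have hb1 : b = v1 := by by_contra h'; exact hb ⟨hbH, h'⟩
        exact h.ne (ha1.trans hb1.symm)
      · rintro (⟨x, y, hx, hy, hxy, rfl, rfl⟩ | ⟨_, h⟩)
        · exfalso
          have hx1 : x = v1 := by
            by_contra h'
            apply ha
            rw [tau_eq_of_ne h']
            exact ⟨hx, h'⟩
          have hy1 : y = v1 := by
            by_contra h'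
            apply hb
            rw [tau_eq_of_ne h']
            exact ⟨hy, h'⟩
          exact hxy.ne (hx1.trans hy1.symm)
        · exact h
  -- the flipped graph is connected and has an edge
  have hadj12 : G'.Adj v1 v2 := Or.inr ⟨fun h => hv2 h.2, hadj⟩
  have hreach : ∀ x y, G.Adj x y → G'.Reachable x y := by
    intro x y h
    by_cases hxy : x ∈ H ∧ y ∈ H
    · have h1' : G'.Adj (tauB v1 v2 x) (tauB v1 v2 y) :=
        Or.inl ⟨x, y, hxy.1, hxy.2, h, rfl, rfl⟩
      have hx : G'.Reachable x (tauB v1 v2 x) := by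
        by_cases hx1 : x = v1
        · subst hx1; rw [tau_v1]; exact hadj12.reachable
        · rw [tau_eq_of_ne hx1]
      have hy : G'.Reachable (tauB v1 v2 y) y := by
        by_cases hy1 : y = v1
        · subst hy1; rw [tau_v1]; exact hadj12.symm.reachable
        · rw [tau_eq_of_ne hy1]
      exact (hx.trans h1'.reachable).trans hy
    · exact SimpleGraph.Adj.reachable (show G'.Adj x y from Or.inr ⟨hxy, h⟩)
  have hG'conn : G'.Connected := by
    rw [connected_iff]
    refine ⟨fun x y => ?_, hGconn.nonempty⟩
    obtain ⟨p⟩ := hGconn.preconnected x y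
    induction p with
    | nil => rfl
    | cons h q ih => exact (hreach _ _ h).trans ih
  have hG'edge : G'.edgeSet.Nonempty := ⟨s(v1, v2), hadj12⟩
  have hedgeB : ∀ B : G.Subgraph, B.IsBlock → B.edgeSet.Nonempty :=
    fun B hB => isBlock_edgeSet_nonempty hGconn hGedge hB
  have hedgeB' : ∀ B' : G'.Subgraph, B'.IsBlock → B'.edgeSet.Nonempty :=
    fun B' hB' => isBlock_edgeSet_nonempty hG'conn hG'edge hB'
  constructor
  · intro B hB
    exact ⟨fd.flipSub B, fd.isBlock_flipSub hB (hedgeB B hB),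
      fd.bijOn_phiB (good_of_isBlock hB)⟩
  · refine ⟨⟨fun B => ⟨fd.flipSub B.1, fd.isBlock_flipSub B.2 (hedgeB B.1 B.2)⟩,
      fun B' => ⟨fd.symm.flipSub B'.1,
        fd.symm.isBlock_flipSub B'.2 (hedgeB' B'.1 B'.2)⟩, ?_, ?_⟩, ?_⟩
    · intro B
      exact Subtype.ext (fd.flipSub_flipSub (good_of_isBlock B.2) (hedgeB B.1 B.2))
    · intro B'
      exact Subtype.ext
        (fd.symm.flipSub_flipSub (good_of_isBlock B'.2) (hedgeB' B'.1 B'.2))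
    · intro B
      have hbij := fd.bijOn_phiB (good_of_isBlock B.2)
      refine ⟨hbij, ?_, ?_⟩
      · show B.1.edgeSet.ncard = (fd.flipSub B.1).edgeSet.ncard
        rw [← hbij.image_eq, Set.ncard_image_of_injOn hbij.injOn]
      · show maxCycleLength B.1 = maxCycleLength (fd.flipSub B.1)
        rw [maxCycleLength_eq, maxCycleLength_eq,
          fd.cycSet_eq (good_of_isBlock B.2) (hedgeB B.1 B.2)]
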